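/- arXiv:1404.6786 — 3 statements merged into one kernel-verified Lean document; each statement's English description precedes it below -/
import Mathlib

section
/- (Subadditive valuations and random subsets) Let S be a finite set and let v be a real-valued function on subsets of S that is subadditive, i.e., v(A ∪ B) ≤ v(A) + v(B) for all A, B ⊆ S. Let R be a random subset of S obtained by including each element of S independently with probability 1/2. Then E[v(R)] ≥ v(S)/2. -/
open Finset

/-- If `v` is a subadditive set function on the subsets of a finite set `S`, and `R`
is a uniformly random subset of `S` (each element being included independently with
probability `1/2`), then `E[v(R)] ≥ v(S)/2`. The expectation is written out as the
average of `v` over all `2^|S|` subsets of `S`. -/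
theorem subadditive_random_subset {α : Type*} [DecidableEq α]
    (S : Finset α) (v : Finset α → ℝ)
    (hsub : ∀ A B : Finset α, A ⊆ S → B ⊆ S → v (A ∪ B) ≤ v A + v B) :
    v S / 2 ≤ (∑ R ∈ S.powerset, v R) / 2 ^ S.card := by
  have hcompl : ∑ R ∈ S.powerset, v (S \ R) = ∑ R ∈ S.powerset, v R := by
    apply Finset.sum_nbij' (fun R => S \ R) (fun R => S \ R)
    · intro a ha; simp
    · intro a ha; simp
    · intro a ha; simp at ha; simp [sdiff_sdiff_right_self, inf_eq_inter,
        Finset.inter_eq_right.mpr ha]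
    · intro a ha; simp at ha; simp [sdiff_sdiff_right_self, inf_eq_inter,
        Finset.inter_eq_right.mpr ha]
    · intro a ha; rfl
  have key : (2 ^ S.card : ℝ) * v S ≤ 2 * ∑ R ∈ S.powerset, v R := by
    calc (2 ^ S.card : ℝ) * v S = ∑ _R ∈ S.powerset, v S := by
          rw [Finset.sum_const, Finset.card_powerset]; push_cast; ring
      _ ≤ ∑ R ∈ S.powerset, (v R + v (S \ R)) := by
          apply Finset.sum_le_sum
          intro R hR
          simp at hR
          have := hsub R (S \ R) hR (Finset.sdiff_subset)
          rwa [Finset.union_sdiff_of_subset hR] at this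
      _ = 2 * ∑ R ∈ S.powerset, v R := by
          rw [Finset.sum_add_distrib, hcompl]; ring
  have hpos : (0:ℝ) < 2 ^ S.card := by positivity
  rw [div_le_div_iff₀ (by norm_num) hpos]
  linarith
end

section
/- (Buyers' welfare in the Arrow-Debreu VCG step with a dummy bidder) Let N be a finite set of buyers, where each i ∈ N has a valuation v_i : [0,1] → ℝ that is nondecreasing, concave, and satisfies v_i(0) = 0, and let p ≥ 0 be a price per unit. Suppose the nonnegative reals (s_i)_{i∈N} together with s_d ≥ 0 satisfy Σ_{i∈N} s_i + s_d ≤ 1/8 and maximize Σ_{i∈N} v_i(s_i) + p·s_d over all such vectors. Then for every nonnegative (o_i)_{i∈N} with Σ_{i∈N} o_i ≤ 1, we have Σ_{i∈N} v_i(s_i) ≥ (1/8)·Σ_{i∈N} v_i(o_i) − p/8. -/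
open Finset

/-- Buyers' welfare in the Arrow-Debreu VCG step with a dummy bidder: if the
nonnegative amounts `(s i)` for the buyers together with the dummy amount `sd` sum to
at most `1/8` and maximize `∑ i, v i (s i) + p·sd` over all such vectors, then for
every feasible allocation `(o i)` (nonnegative, summing to at most `1`) we have
`∑ i, v i (s i) ≥ (1/8)·∑ i, v i (o i) - p/8`. -/
theorem arrow_debreu_vcg_buyers_welfare
    {ι : Type*} [Fintype ι]
    (v : ι → ℝ → ℝ)
    (hzero : ∀ i, v i 0 = 0)
    (hmono : ∀ i, MonotoneOn (v i) (Set.Icc (0 : ℝ) 1))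
    (hconc : ∀ i, ConcaveOn ℝ (Set.Icc (0 : ℝ) 1) (v i))
    (p : ℝ) (hp : 0 ≤ p)
    (s : ι → ℝ) (sd : ℝ)
    (hs_nonneg : ∀ i, 0 ≤ s i) (hsd_nonneg : 0 ≤ sd)
    (hs_sum : ∑ i, s i + sd ≤ 1 / 8)
    (hopt : ∀ (s' : ι → ℝ) (sd' : ℝ), (∀ i, 0 ≤ s' i) → 0 ≤ sd' →
      ∑ i, s' i + sd' ≤ 1 / 8 →
      ∑ i, v i (s' i) + p * sd' ≤ ∑ i, v i (s i) + p * sd) :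
    ∀ o : ι → ℝ, (∀ i, 0 ≤ o i) → ∑ i, o i ≤ 1 →
      (1 / 8) * ∑ i, v i (o i) - p / 8 ≤ ∑ i, v i (s i) := by
  intro o ho_nonneg ho_sum
  have hoi_mem : ∀ i, o i ∈ Set.Icc (0 : ℝ) 1 := by
    intro i
    refine ⟨ho_nonneg i, ?_⟩
    calc o i ≤ ∑ j, o j := Finset.single_le_sum (fun j _ => ho_nonneg j) (mem_univ i)
      _ ≤ 1 := ho_sum
  -- candidate allocation o/8
  have hcand := hopt (fun i => o i / 8) 0 (fun i => div_nonneg (ho_nonneg i) (by norm_num)) le_rfl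
    (by
      simp only [add_zero]
      rw [← Finset.sum_div]
      linarith)
  simp only [mul_zero, add_zero] at hcand
  have hconc8 : ∀ i, (1 / 8) * v i (o i) ≤ v i (o i / 8) := by
    intro i
    have h := (hconc i).2 (hoi_mem i) (⟨le_rfl, zero_le_one⟩ : (0:ℝ) ∈ Set.Icc (0:ℝ) 1)
      (by norm_num : (0:ℝ) ≤ 1/8) (by norm_num : (0:ℝ) ≤ 7/8) (by norm_num)
    rw [hzero i] at h
    have heq : (1/8:ℝ) • o i + (7/8:ℝ) • (0:ℝ) = o i / 8 := by
      simp [smul_eq_mul]; ring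
    rw [heq] at h
    simpa [smul_eq_mul] using h
  have hsum8 : (1 / 8) * ∑ i, v i (o i) ≤ ∑ i, v i (o i / 8) := by
    rw [Finset.mul_sum]
    exact Finset.sum_le_sum fun i _ => hconc8 i
  have hsd_le : sd ≤ 1 / 8 := by
    have : (0:ℝ) ≤ ∑ i, s i := Finset.sum_nonneg fun i _ => hs_nonneg i
    linarith
  have hpsd : p * sd ≤ p / 8 := by nlinarith
  linarith
end

section
/- (Existence of three substantial groups) Let N be a finite set and r : N → ℝ with r_i ≥ 0 for all i and Σ_{i∈N} r_i = 1. Suppose there is i₀ ∈ N with r_{i₀} ≤ 1/3 and r_i ≤ 1/8 for every i ≠ i₀. Then there exist disjoint subsets T₁, T₂ ⊆ N \ {i₀} such that 1/4 ≤ Σ_{i∈T_l} r_i ≤ 3/8 for l = 1, 2, and Σ_{i ∈ N \ (T₁ ∪ T₂)} r_i ≥ 1/4; in particular, N is partitioned into three groups each holding at least 1/4 of the good. -/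
open Finset

lemma pick_block {ι : Type*} [DecidableEq ι] (r : ι → ℝ) (h0 : ∀ i, 0 ≤ r i) :
    ∀ S : Finset ι, (∀ i ∈ S, r i ≤ 1/8) → 1/4 ≤ ∑ i ∈ S, r i →
    ∃ T ⊆ S, 1/4 ≤ ∑ i ∈ T, r i ∧ ∑ i ∈ T, r i ≤ 3/8 := by
  intro S
  induction S using Finset.strongInductionOn with
  | _ S ih =>
    intro hsmall hge
    by_cases hle : ∑ i ∈ S, r i ≤ 3/8
    · exact ⟨S, Finset.Subset.refl S, hge, hle⟩
    · push_neg at hle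
      have hne : S.Nonempty := by
        rcases S.eq_empty_or_nonempty with h | h
        · simp [h] at hge; linarith
        · exact h
      obtain ⟨a, ha⟩ := hne
      have hsub : S.erase a ⊂ S := Finset.erase_ssubset ha
      have hsum : ∑ i ∈ S.erase a, r i = ∑ i ∈ S, r i - r a := by
        rw [Finset.sum_erase_eq_sub ha]
      obtain ⟨T, hT, h1, h2⟩ := ih (S.erase a) hsub
        (fun i hi => hsmall i (Finset.mem_of_mem_erase hi))
        (by have := hsmall a ha; rw [hsum]; linarith)
      exact ⟨T, hT.trans (Finset.erase_subset a S), h1, h2⟩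

/-- Existence of three substantial groups: if the endowments `r i ≥ 0` sum to `1`,
one distinguished agent `i₀` has `r i₀ ≤ 1/3`, and every other agent has `r i ≤ 1/8`,
then there are disjoint groups `T₁, T₂` avoiding `i₀` whose endowments sum to between
`1/4` and `3/8` each, and the remaining agents hold at least `1/4` of the good. -/
theorem exists_three_substantial_groups
    {ι : Type*} [Fintype ι] [DecidableEq ι]
    (r : ι → ℝ) (hr_nonneg : ∀ i, 0 ≤ r i) (hr_sum : ∑ i, r i = 1)
    (i₀ : ι) (hi₀ : r i₀ ≤ 1 / 3)
    (hsmall : ∀ i, i ≠ i₀ → r i ≤ 1 / 8) :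
    ∃ T₁ T₂ : Finset ι, Disjoint T₁ T₂ ∧ i₀ ∉ T₁ ∧ i₀ ∉ T₂ ∧
      (1 / 4 ≤ ∑ i ∈ T₁, r i ∧ ∑ i ∈ T₁, r i ≤ 3 / 8) ∧
      (1 / 4 ≤ ∑ i ∈ T₂, r i ∧ ∑ i ∈ T₂, r i ≤ 3 / 8) ∧
      1 / 4 ≤ ∑ i ∈ Finset.univ \ (T₁ ∪ T₂), r i := by
  set S : Finset ι := Finset.univ.erase i₀ with hS
  have hSsum : ∑ i ∈ S, r i = 1 - r i₀ := by
    rw [hS, Finset.sum_erase_eq_sub (Finset.mem_univ i₀), hr_sum]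
  have hSsmall : ∀ i ∈ S, r i ≤ 1/8 := fun i hi =>
    hsmall i (Finset.ne_of_mem_erase hi)
  obtain ⟨T₁, hT₁S, h11, h12⟩ := pick_block r hr_nonneg S hSsmall (by rw [hSsum]; linarith)
  have hS'sum : ∑ i ∈ S \ T₁, r i = (1 - r i₀) - ∑ i ∈ T₁, r i := by
    rw [Finset.sum_sdiff_eq_sub hT₁S, hSsum]
  obtain ⟨T₂, hT₂S, h21, h22⟩ := pick_block r hr_nonneg (S \ T₁)
    (fun i hi => hSsmall i (Finset.mem_sdiff.mp hi).1) (by rw [hS'sum]; linarith)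
  have hdis : Disjoint T₁ T₂ :=
    Finset.disjoint_left.mpr fun a ha1 ha2 => (Finset.mem_sdiff.mp (hT₂S ha2)).2 ha1
  have hni₀ : ∀ {T : Finset ι}, T ⊆ S → i₀ ∉ T := fun hT h =>
    (Finset.ne_of_mem_erase (hT h)) rfl
  have hUsub : T₁ ∪ T₂ ⊆ Finset.univ := Finset.subset_univ _
  have hrest : ∑ i ∈ Finset.univ \ (T₁ ∪ T₂), r i
      = 1 - (∑ i ∈ T₁, r i + ∑ i ∈ T₂, r i) := by
    rw [Finset.sum_sdiff_eq_sub hUsub, hr_sum, Finset.sum_union hdis]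
  refine ⟨T₁, T₂, hdis, hni₀ hT₁S, hni₀ (hT₂S.trans (Finset.sdiff_subset)), ⟨h11, h12⟩,
    ⟨h21, h22⟩, ?_⟩
  rw [hrest]; linarith
end
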